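/- Let Z^n be a product of n independent random variables on a finite set Z, and let D ⊆ Z^n with P(D) > 0. Then for every integer l > sqrt((n/2)·log(1/P(D))), the Hamming l-neighbourhood Γ^l(D) := {z̃ ∈ Z^n : ∃ z ∈ D, d_H(z,z̃) ≤ l} satisfies P(Γ^l(D)) ≥ 1 − exp(−(2/n)·(l − sqrt((n/2)·log(1/P(D))))²). -/

import Mathlib

open Real

lemma key_ineq (μ : ℝ) (h0 : 0 ≤ μ) (h1 : μ ≤ 1) (t : ℝ) :
    1 - μ + μ * exp t ≤ exp (μ * t + t ^ 2 / 8) := by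
  have hdpos : ∀ s : ℝ, 0 < 1 - μ + μ * exp s := by
    intro s
    rcases eq_or_lt_of_le h0 with h | h
    · simp [← h]
    · nlinarith [exp_pos s, mul_pos h (exp_pos s)]
  set g : ℝ → ℝ := fun s => μ * s + s ^ 2 / 8 - Real.log (1 - μ + μ * exp s) with hg
  set g' : ℝ → ℝ := fun s => μ + s / 4 - μ * exp s / (1 - μ + μ * exp s) with hg'
  have hd : ∀ s : ℝ, HasDerivAt (fun s => 1 - μ + μ * exp s) (μ * exp s) s := by
    intro s
    simpa using ((Real.hasDerivAt_exp s).const_mul μ).const_add (1 - μ)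
  have hgd : ∀ s : ℝ, HasDerivAt g (g' s) s := by
    intro s
    have h1' : HasDerivAt (fun s : ℝ => μ * s + s ^ 2 / 8) (μ + 2 * s / 8) s := by
      have := ((hasDerivAt_pow 2 s).div_const 8).const_add 0
      have h2 : HasDerivAt (fun s : ℝ => μ * s) μ s := by
        simpa using (hasDerivAt_id s).const_mul μ
      exact (h2.add ((hasDerivAt_pow 2 s).div_const 8)).congr_deriv (by norm_num)
    have h2' : HasDerivAt (fun s => Real.log (1 - μ + μ * exp s))
        (μ * exp s / (1 - μ + μ * exp s)) s := (hd s).log (hdpos s).ne'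
    have := h1'.sub h2'
    refine this.congr_deriv ?_
    simp only [hg']
    ring
  have hg'd : ∀ s : ℝ, HasDerivAt g'
      (1 / 4 - μ * exp s * (1 - μ) / (1 - μ + μ * exp s) ^ 2) s := by
    intro s
    have hq : HasDerivAt (fun s => μ * exp s / (1 - μ + μ * exp s))
        ((μ * exp s * (1 - μ + μ * exp s) - μ * exp s * (μ * exp s)) /
          (1 - μ + μ * exp s) ^ 2) s :=
      (((Real.hasDerivAt_exp s).const_mul μ)).div (hd s) (hdpos s).ne'
    have hl : HasDerivAt (fun s : ℝ => μ + s / 4) (1 / 4) s := by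
      simpa using ((hasDerivAt_id s).div_const 4).const_add μ
    have := hl.sub hq
    refine this.congr_deriv ?_
    have : μ * exp s * (1 - μ + μ * exp s) - μ * exp s * (μ * exp s)
        = μ * exp s * (1 - μ) := by ring
    rw [this]
  have hg''nonneg : ∀ s : ℝ, 0 ≤ 1 / 4 - μ * exp s * (1 - μ) / (1 - μ + μ * exp s) ^ 2 := by
    intro s
    rw [sub_nonneg, div_le_iff₀ (pow_pos (hdpos s) 2)]
    nlinarith [sq_nonneg ((1 - μ) - μ * exp s)]
  have hmono : Monotone g' := monotone_of_hasDerivAt_nonneg hg'd (fun s => hg''nonneg s)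
  have hg'0 : g' 0 = 0 := by
    simp [hg']
  have hgs : ∀ s : ℝ, 0 ≤ g s := by
    intro s
    have hg0 : g 0 = 0 := by simp [hg]
    rcases le_total 0 s with hs | hs
    · have hmonoOn : MonotoneOn g (Set.Ici 0) := by
        apply monotoneOn_of_hasDerivWithinAt_nonneg (convex_Ici 0)
          (fun x _ => (hgd x).continuousAt.continuousWithinAt)
          (fun x _ => (hgd x).hasDerivWithinAt)
        intro x hx
        rw [interior_Ici] at hx
        rw [← hg'0]
        exact hmono (le_of_lt hx)
      have := hmonoOn (Set.self_mem_Ici) hs hs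
      rwa [hg0] at this
    · have hantiOn : AntitoneOn g (Set.Iic 0) := by
        apply antitoneOn_of_hasDerivWithinAt_nonpos (convex_Iic 0)
          (fun x _ => (hgd x).continuousAt.continuousWithinAt)
          (fun x _ => (hgd x).hasDerivWithinAt)
        intro x hx
        rw [interior_Iic] at hx
        rw [← hg'0]
        exact hmono (le_of_lt hx)
      have := hantiOn hs (Set.self_mem_Iic) hs
      rwa [hg0] at this
  have := hgs t
  have hlog : Real.log (1 - μ + μ * exp t) ≤ μ * t + t ^ 2 / 8 := by
    simp only [hg] at this; linarith
  calc 1 - μ + μ * exp t = exp (Real.log (1 - μ + μ * exp t)) := (exp_log (hdpos t)).symm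
    _ ≤ exp (μ * t + t ^ 2 / 8) := exp_le_exp.2 hlog

lemma hoeffding_finset {α : Type*} [Fintype α] [Nonempty α] (q : α → ℝ)
    (hq0 : ∀ a, 0 ≤ q a) (hq1 : ∑ a, q a = 1) (X : α → ℝ)
    (hX : ∀ a b, X a - X b ≤ 1) (t : ℝ) :
    ∑ a, q a * exp (t * (X a - ∑ b, q b * X b)) ≤ exp (t ^ 2 / 8) := by
  obtain ⟨a₀, -, ha₀⟩ := Finset.exists_min_image Finset.univ X Finset.univ_nonempty
  set c := X a₀ with hc
  set Y : α → ℝ := fun a => X a - c with hY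
  have hY0 : ∀ a, 0 ≤ Y a := fun a => by
    have := ha₀ a (Finset.mem_univ a); simp [hY]; linarith
  have hY1 : ∀ a, Y a ≤ 1 := fun a => by
    have := hX a a₀; simp [hY, hc]; linarith
  set m : ℝ := ∑ a, q a * Y a with hm
  have hmean : ∑ b, q b * X b = m + c := by
    simp only [hm, hY, mul_sub, Finset.sum_sub_distrib, ← Finset.sum_mul, hq1]
    ring
  have hm0 : 0 ≤ m := Finset.sum_nonneg fun a _ => mul_nonneg (hq0 a) (hY0 a)
  have hm1 : m ≤ 1 := by
    calc m ≤ ∑ a, q a * 1 := Finset.sum_le_sum fun a _ =>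
            mul_le_mul_of_nonneg_left (hY1 a) (hq0 a)
    _ = 1 := by simp [hq1]
  have hconv : ∀ a, exp (t * Y a) ≤ (1 - Y a) + Y a * exp t := by
    intro a
    have := convexOn_exp.2 (Set.mem_univ (0 : ℝ)) (Set.mem_univ t)
      (by linarith [hY1 a] : (0:ℝ) ≤ 1 - Y a) (hY0 a) (by ring)
    simpa [smul_eq_mul, mul_comm] using this
  calc ∑ a, q a * exp (t * (X a - ∑ b, q b * X b))
      = exp (-(t * m)) * ∑ a, q a * exp (t * Y a) := by
        rw [Finset.mul_sum]
        refine Finset.sum_congr rfl fun a _ => ?_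
        rw [← mul_assoc, mul_comm (exp (-(t*m))) (q a), mul_assoc, ← Real.exp_add]
        congr 2
        rw [hmean, hY]
        ring
    _ ≤ exp (-(t * m)) * (1 - m + m * exp t) := by
        refine mul_le_mul_of_nonneg_left ?_ (exp_nonneg _)
        calc ∑ a, q a * exp (t * Y a) ≤ ∑ a, q a * ((1 - Y a) + Y a * exp t) :=
              Finset.sum_le_sum fun a _ => mul_le_mul_of_nonneg_left (hconv a) (hq0 a)
          _ = 1 - m + m * exp t := by
              simp only [mul_add, mul_sub, Finset.sum_add_distrib, Finset.sum_sub_distrib,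
                mul_one, hq1, ← Finset.sum_mul, ← hm]
              congr 1
              rw [hm, Finset.sum_mul]
              exact Finset.sum_congr rfl fun x _ => by ring
    _ ≤ exp (-(t * m)) * exp (m * t + t ^ 2 / 8) :=
        mul_le_mul_of_nonneg_left (key_ineq m hm0 hm1 t) (exp_nonneg _)
    _ = exp (t ^ 2 / 8) := by rw [← Real.exp_add]; ring_nf

section hamming
variable {Z : Type*} [DecidableEq Z] {n : ℕ}

lemma hd_cons_le (z : Z) (w w' : Fin n → Z) :
    hammingDist (Fin.cons z w) (Fin.cons z w' : Fin (n+1) → Z) ≤ hammingDist w w' := by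
  set u : Fin (n+1) → Z := Fin.cons z w with hu
  set u' : Fin (n+1) → Z := Fin.cons z w' with hu'
  unfold hammingDist
  have : (Finset.univ.filter fun i => u i ≠ u' i)
      = (Finset.univ.filter fun j => w j ≠ w' j).image Fin.succ := by
    ext i
    simp only [Finset.mem_filter, Finset.mem_image, Finset.mem_univ, true_and]
    constructor
    · intro hi
      induction i using Fin.cases with
      | zero => simp [hu, hu', Fin.cons_zero] at hi
      | succ j => exact ⟨j, by simpa [hu, hu', Fin.cons_succ] using hi, rfl⟩
    · rintro ⟨j, hj, rfl⟩
      simpa [hu, hu', Fin.cons_succ] using hj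
  rw [this]
  exact Finset.card_image_le

lemma hd_cons_fst_le_one (a b : Z) (w : Fin n → Z) :
    hammingDist (Fin.cons a w) (Fin.cons b w : Fin (n+1) → Z) ≤ 1 := by
  set u : Fin (n+1) → Z := Fin.cons a w with hu
  set u' : Fin (n+1) → Z := Fin.cons b w with hu'
  unfold hammingDist
  have : (Finset.univ.filter fun i => u i ≠ u' i) ⊆ {0} := by
    intro i hi
    simp only [Finset.mem_filter, Finset.mem_univ, true_and] at hi
    induction i using Fin.cases with
    | zero => simp
    | succ j => simp [hu, hu', Fin.cons_succ] at hi
  simpa using Finset.card_le_card this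

end hamming

lemma mgf_bound {Z : Type*} [Fintype Z] [Nonempty Z] [DecidableEq Z] :
    ∀ (n : ℕ) (p : Fin n → Z → ℝ), (∀ i z, 0 ≤ p i z) → (∀ i, ∑ z, p i z = 1) →
    ∀ (F : (Fin n → Z) → ℝ), (∀ g g', F g - F g' ≤ hammingDist g g') →
    ∀ t : ℝ, ∑ g, (∏ i, p i (g i)) * exp (t * F g) ≤
      exp (t * (∑ g, (∏ i, p i (g i)) * F g) + n * t ^ 2 / 8) := by
  intro n
  induction n with
  | zero =>
    intro p hp0 hp1 F hF t
    simp [Fintype.sum_unique, Finset.univ_eq_empty]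
  | succ n ih =>
    intro p hp0 hp1 F hF t
    set q : Z → ℝ := fun z => p 0 z with hq
    set p' : Fin n → Z → ℝ := fun i => p i.succ with hp'
    have hq0 : ∀ z, 0 ≤ q z := fun z => hp0 0 z
    have hq1 : ∑ z, q z = 1 := hp1 0
    have hp'0 : ∀ i z, 0 ≤ p' i z := fun i z => hp0 i.succ z
    have hp'1 : ∀ i, ∑ z, p' i z = 1 := fun i => hp1 i.succ
    set G : (Fin n → Z) → ℝ := fun w => ∑ z, q z * F (Fin.cons z w) with hG
    -- sum decomposition
    have hsum : ∀ h : (Fin (n+1) → Z) → ℝ,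
        ∑ g, h g = ∑ z, ∑ w : Fin n → Z, h (Fin.cons z w) := by
      intro h
      rw [← Equiv.sum_comp (Fin.consEquiv (fun _ : Fin (n+1) => Z)) h,
        Fintype.sum_prod_type]
      rfl
    have hprod : ∀ (z : Z) (w : Fin n → Z),
        ∏ i, p i ((Fin.cons z w : Fin (n+1) → Z) i) = q z * ∏ i, p' i (w i) := by
      intro z w
      rw [Fin.prod_univ_succ]
      simp [hq, hp', Fin.cons_succ, Fin.cons_zero]
    -- Lipschitz for G
    have hGlip : ∀ w w', G w - G w' ≤ hammingDist w w' := by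
      intro w w'
      rw [hG]
      simp only
      rw [← Finset.sum_sub_distrib]
      calc ∑ z, (q z * F (Fin.cons z w) - q z * F (Fin.cons z w'))
          ≤ ∑ z, q z * (hammingDist w w' : ℝ) := by
            refine Finset.sum_le_sum fun z _ => ?_
            rw [← mul_sub]
            refine mul_le_mul_of_nonneg_left ?_ (hq0 z)
            calc F (Fin.cons z w) - F (Fin.cons z w')
                ≤ (hammingDist (Fin.cons z w) (Fin.cons z w' : Fin (n+1) → Z) : ℝ) :=
                  hF _ _
              _ ≤ (hammingDist w w' : ℝ) := by exact_mod_cast hd_cons_le z w w'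
        _ = (hammingDist w w' : ℝ) := by rw [← Finset.sum_mul, hq1, one_mul]
    -- mean identity
    have hEG : ∑ w : Fin n → Z, (∏ i, p' i (w i)) * G w
        = ∑ g, (∏ i, p i (g i)) * F g := by
      rw [hsum fun g => (∏ i, p i (g i)) * F g, Finset.sum_comm]
      refine Finset.sum_congr rfl fun w _ => ?_
      rw [hG]
      simp only
      rw [Finset.mul_sum]
      refine Finset.sum_congr rfl fun z _ => ?_
      rw [hprod]
      ring
    -- main computation
    have step1 : ∑ g, (∏ i, p i (g i)) * exp (t * F g)
        = ∑ w : Fin n → Z, (∏ i, p' i (w i)) *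
            (∑ z, q z * exp (t * F (Fin.cons z w))) := by
      rw [hsum fun g => (∏ i, p i (g i)) * exp (t * F g), Finset.sum_comm]
      refine Finset.sum_congr rfl fun w _ => ?_
      rw [Finset.mul_sum]
      refine Finset.sum_congr rfl fun z _ => ?_
      rw [hprod]
      ring
    have inner_le : ∀ w : Fin n → Z,
        ∑ z, q z * exp (t * F (Fin.cons z w)) ≤ exp (t ^ 2 / 8) * exp (t * G w) := by
      intro w
      have hX : ∀ a b : Z, F (Fin.cons a w) - F (Fin.cons b w) ≤ 1 := by
        intro a b
        calc F (Fin.cons a w) - F (Fin.cons b w)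
            ≤ (hammingDist (Fin.cons a w) (Fin.cons b w : Fin (n+1) → Z) : ℝ) := hF _ _
          _ ≤ 1 := by exact_mod_cast hd_cons_fst_le_one a b w
      have := hoeffding_finset q hq0 hq1 (fun z => F (Fin.cons z w)) hX t
      calc ∑ z, q z * exp (t * F (Fin.cons z w))
          = (∑ z, q z * exp (t * (F (Fin.cons z w) - G w))) * exp (t * G w) := by
            rw [Finset.sum_mul]
            refine Finset.sum_congr rfl fun z _ => ?_
            rw [mul_assoc, ← Real.exp_add]
            ring_nf
        _ ≤ exp (t ^ 2 / 8) * exp (t * G w) :=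
            mul_le_mul_of_nonneg_right this (exp_nonneg _)
    calc ∑ g, (∏ i, p i (g i)) * exp (t * F g)
        = ∑ w : Fin n → Z, (∏ i, p' i (w i)) *
            (∑ z, q z * exp (t * F (Fin.cons z w))) := step1
      _ ≤ ∑ w : Fin n → Z, (∏ i, p' i (w i)) * (exp (t ^ 2 / 8) * exp (t * G w)) := by
          refine Finset.sum_le_sum fun w _ => ?_
          exact mul_le_mul_of_nonneg_left (inner_le w)
            (Finset.prod_nonneg fun i _ => hp'0 i (w i))
      _ = exp (t ^ 2 / 8) * ∑ w : Fin n → Z, (∏ i, p' i (w i)) * exp (t * G w) := by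
          rw [Finset.mul_sum]
          exact Finset.sum_congr rfl fun w _ => by ring
      _ ≤ exp (t ^ 2 / 8) *
          exp (t * (∑ w : Fin n → Z, (∏ i, p' i (w i)) * G w) + n * t ^ 2 / 8) :=
          mul_le_mul_of_nonneg_left (ih p' hp'0 hp'1 G hGlip t) (exp_nonneg _)
      _ = exp (t * (∑ g, (∏ i, p i (g i)) * F g) + (n + 1 : ℕ) * t ^ 2 / 8) := by
          rw [← Real.exp_add, hEG]
          push_cast
          ring_nf

lemma total_mass {Z : Type*} [Fintype Z] :
    ∀ (n : ℕ) (p : Fin n → Z → ℝ), (∀ i, ∑ z, p i z = 1) →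
    ∑ g : Fin n → Z, ∏ i, p i (g i) = 1 := by
  intro n
  induction n with
  | zero => intro p hp1; simp [Fintype.sum_unique, Finset.univ_eq_empty]
  | succ n ih =>
    intro p hp1
    have hsum : ∀ h : (Fin (n+1) → Z) → ℝ,
        ∑ g, h g = ∑ z, ∑ w : Fin n → Z, h (Fin.cons z w) := by
      intro h
      rw [← Equiv.sum_comp (Fin.consEquiv (fun _ : Fin (n+1) => Z)) h,
        Fintype.sum_prod_type]
      rfl
    rw [hsum fun g => ∏ i, p i (g i)]
    have : ∀ (z : Z) (w : Fin n → Z),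
        ∏ i, p i ((Fin.cons z w : Fin (n+1) → Z) i)
          = p 0 z * ∏ i, p i.succ (w i) := by
      intro z w
      rw [Fin.prod_univ_succ]
      simp [Fin.cons_succ, Fin.cons_zero]
    calc ∑ z, ∑ w : Fin n → Z, ∏ i, p i ((Fin.cons z w : Fin (n+1) → Z) i)
        = ∑ z, p 0 z * ∑ w : Fin n → Z, ∏ i, p i.succ (w i) := by
          refine Finset.sum_congr rfl fun z _ => ?_
          rw [Finset.mul_sum]
          exact Finset.sum_congr rfl fun w _ => this z w
      _ = 1 := by
          rw [ih (fun i => p i.succ) (fun i => hp1 i.succ)]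
          simpa using hp1 0

lemma chernoff {Z : Type*} [Fintype Z] [Nonempty Z] [DecidableEq Z]
    (n : ℕ) (hn : 0 < n) (p : Fin n → Z → ℝ)
    (hp0 : ∀ i z, 0 ≤ p i z) (hp1 : ∀ i, ∑ z, p i z = 1)
    (F : (Fin n → Z) → ℝ) (hF : ∀ g g', F g - F g' ≤ hammingDist g g')
    (r : ℝ) (hr : 0 ≤ r) :
    ∑ g ∈ Finset.univ.filter
        (fun g => (∑ g', (∏ i, p i (g' i)) * F g') + r ≤ F g), ∏ i, p i (g i)
      ≤ exp (-2 * r ^ 2 / n) := by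
  set m : ℝ := ∑ g', (∏ i, p i (g' i)) * F g' with hm
  set t : ℝ := 4 * r / n with ht
  have hnpos : (0:ℝ) < n := by exact_mod_cast hn
  have htn : 0 ≤ t := by positivity
  have hμ0 : ∀ g : Fin n → Z, 0 ≤ ∏ i, p i (g i) :=
    fun g => Finset.prod_nonneg fun i _ => hp0 i (g i)
  calc ∑ g ∈ Finset.univ.filter (fun g => m + r ≤ F g), ∏ i, p i (g i)
      ≤ ∑ g ∈ Finset.univ.filter (fun g => m + r ≤ F g),
          (∏ i, p i (g i)) * exp (t * (F g - m - r)) := by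
        refine Finset.sum_le_sum fun g hg => ?_
        rw [Finset.mem_filter] at hg
        have h1 : (1:ℝ) ≤ exp (t * (F g - m - r)) := by
          rw [show (1:ℝ) = exp 0 by simp]
          exact exp_le_exp.2 (mul_nonneg htn (by linarith [hg.2]))
        nlinarith [hμ0 g]
    _ ≤ ∑ g, (∏ i, p i (g i)) * exp (t * (F g - m - r)) :=
        Finset.sum_le_sum_of_subset_of_nonneg (Finset.filter_subset _ _)
          (fun g _ _ => mul_nonneg (hμ0 g) (exp_nonneg _))
    _ = exp (-(t * (m + r))) * ∑ g, (∏ i, p i (g i)) * exp (t * F g) := by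
        rw [Finset.mul_sum]
        refine Finset.sum_congr rfl fun g _ => ?_
        rw [← mul_assoc, mul_comm (exp _) (∏ i, p i (g i)), mul_assoc, ← Real.exp_add]
        ring_nf
    _ ≤ exp (-(t * (m + r))) * exp (t * m + n * t ^ 2 / 8) :=
        mul_le_mul_of_nonneg_left (mgf_bound n p hp0 hp1 F hF t) (exp_nonneg _)
    _ = exp (n * t ^ 2 / 8 - t * r) := by rw [← Real.exp_add]; ring_nf
    _ = exp (-2 * r ^ 2 / n) := by
        congr 1
        rw [ht]
        field_simp
        ring



open Classical in
/-- Marton's non-asymptotic blowing-up lemma: for `n` independent random variables on a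
finite set `Z` and a set `D` with `P(D) > 0`, for every integer
`l > sqrt((n/2)·log(1/P(D)))`, the Hamming `l`-neighbourhood of `D` satisfies
`P(Γˡ(D)) ≥ 1 − exp(−(2/n)(l − sqrt((n/2)·log(1/P(D))))²)`. -/
theorem blowing_up_lemma {Z : Type*} [Fintype Z] (n : ℕ) (hn : 0 < n)
    (p : Fin n → Z → ℝ) (hp0 : ∀ i z, 0 ≤ p i z) (hp1 : ∀ i, ∑ z, p i z = 1)
    (D : Finset (Fin n → Z)) (hpos : 0 < ∑ f ∈ D, ∏ i, p i (f i))
    (l : ℕ)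
    (hl : Real.sqrt (((n : ℝ) / 2) * Real.log (1 / ∑ f ∈ D, ∏ i, p i (f i))) < l) :
    1 - Real.exp (-(2 / (n : ℝ)) *
        ((l : ℝ) - Real.sqrt (((n : ℝ) / 2) *
          Real.log (1 / ∑ f ∈ D, ∏ i, p i (f i)))) ^ 2) ≤
      ∑ g ∈ Finset.univ.filter (fun g => ∃ f ∈ D, hammingDist f g ≤ l),
        ∏ i, p i (g i) := by
  classical
  have hne : D.Nonempty := by
    rcases D.eq_empty_or_nonempty with h | h
    · rw [h] at hpos; simp at hpos
    · exact h
  have hZ : Nonempty Z := ⟨hne.choose ⟨0, hn⟩⟩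
  set μD : ℝ := ∑ f ∈ D, ∏ i, p i (f i) with hμD
  have hμ0 : ∀ g : Fin n → Z, 0 ≤ ∏ i, p i (g i) :=
    fun g => Finset.prod_nonneg fun i _ => hp0 i (g i)
  have hT : ∑ g : Fin n → Z, ∏ i, p i (g i) = 1 := total_mass n p hp1
  have hμD1 : μD ≤ 1 := by
    rw [← hT]
    exact Finset.sum_le_sum_of_subset_of_nonneg (Finset.subset_univ D)
      fun g _ _ => hμ0 g
  have hnpos : (0:ℝ) < n := by exact_mod_cast hn
  -- the distance-to-D function
  set Fnat : (Fin n → Z) → ℕ :=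
    fun g => (D.image fun f => hammingDist f g).min' (hne.image _) with hFnat
  set F : (Fin n → Z) → ℝ := fun g => (Fnat g : ℝ) with hF
  have hF0 : ∀ g, 0 ≤ F g := fun g => Nat.cast_nonneg _
  have hFD : ∀ g ∈ D, F g = 0 := by
    intro g hg
    have h1 : Fnat g ≤ hammingDist g g :=
      Finset.min'_le _ _ (Finset.mem_image_of_mem _ hg)
    rw [hammingDist_self, Nat.le_zero] at h1
    simp [hF, h1]
  have hFlip : ∀ g g', F g - F g' ≤ hammingDist g g' := by
    intro g g'
    obtain ⟨f, hfD, hf⟩ : ∃ f ∈ D, Fnat g' = hammingDist f g' := by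
      have := Finset.min'_mem (D.image fun f => hammingDist f g') (hne.image _)
      rw [Finset.mem_image] at this
      obtain ⟨f, hfD, hf⟩ := this
      exact ⟨f, hfD, hf.symm⟩
    have h1 : Fnat g ≤ hammingDist f g :=
      Finset.min'_le _ _ (Finset.mem_image_of_mem _ hfD)
    have h2 : hammingDist f g ≤ hammingDist f g' + hammingDist g' g :=
      hammingDist_triangle f g' g
    have h3 : hammingDist g' g = hammingDist g g' := hammingDist_comm g' g
    have : Fnat g ≤ Fnat g' + hammingDist g g' := by omega
    have := (Nat.cast_le (α := ℝ)).2 this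
    push_cast at this
    simp only [hF]
    linarith
  set m : ℝ := ∑ g : Fin n → Z, (∏ i, p i (g i)) * F g with hm
  have hm0 : 0 ≤ m :=
    Finset.sum_nonneg fun g _ => mul_nonneg (hμ0 g) (hF0 g)
  set a : ℝ := Real.sqrt (((n : ℝ) / 2) * Real.log (1 / μD)) with ha
  -- lower tail bound: μD ≤ exp (-2 m² / n)
  have hlow : μD ≤ exp (-2 * m ^ 2 / n) := by
    have hchern := chernoff n hn p hp0 hp1 (fun g => -F g)
      (fun g g' => by
        have h := hFlip g' g
        rw [hammingDist_comm g' g] at h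
        beta_reduce
        linarith) m hm0
    refine le_trans
      (Finset.sum_le_sum_of_subset_of_nonneg ?_ fun g _ _ => hμ0 g) hchern
    intro g hg
    rw [Finset.mem_filter]
    refine ⟨Finset.mem_univ g, ?_⟩
    have hmean : ∑ g' : Fin n → Z, (∏ i, p i (g' i)) * -F g' = -m := by
      rw [hm, ← Finset.sum_neg_distrib]
      exact Finset.sum_congr rfl fun g' _ => by ring
    beta_reduce
    rw [hmean]
    have := hFD g hg
    simp [this]
  have hm_le_a : m ≤ a := by
    have hlog : Real.log μD ≤ -2 * m ^ 2 / n := by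
      calc Real.log μD ≤ Real.log (exp (-2 * m ^ 2 / n)) :=
            Real.log_le_log hpos hlow
        _ = -2 * m ^ 2 / n := Real.log_exp _
    have h2 : 2 * m ^ 2 / n ≤ -Real.log μD := by
      rw [show (-2 : ℝ) * m ^ 2 / n = -(2 * m ^ 2 / n) by ring] at hlog
      linarith
    have h3 : m ^ 2 ≤ ((n:ℝ) / 2) * Real.log (1 / μD) := by
      rw [one_div, Real.log_inv]
      calc m ^ 2 = ((n:ℝ) / 2) * (2 * m ^ 2 / n) := by field_simp
        _ ≤ ((n:ℝ) / 2) * -Real.log μD :=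
            mul_le_mul_of_nonneg_left h2 (by positivity)
    rw [ha, ← Real.sqrt_sq hm0]
    exact Real.sqrt_le_sqrt h3
  -- upper tail
  set r : ℝ := (l : ℝ) - m with hr
  have hal : a < l := hl
  have hr0 : 0 ≤ r := by rw [hr]; linarith
  have hup : ∑ g ∈ Finset.univ.filter
      (fun g => ¬ ∃ f ∈ D, hammingDist f g ≤ l), ∏ i, p i (g i)
      ≤ exp (-2 * r ^ 2 / n) := by
    have hchern := chernoff n hn p hp0 hp1 F hFlip r hr0
    refine le_trans (Finset.sum_le_sum_of_subset_of_nonneg ?_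
      fun g _ _ => hμ0 g) hchern
    intro g hg
    rw [Finset.mem_filter] at hg ⊢
    refine ⟨Finset.mem_univ g, ?_⟩
    push_neg at hg
    have hg2 := hg.2
    have hlF : (l : ℝ) ≤ F g := by
      have : l + 1 ≤ Fnat g := by
        apply Finset.le_min'
        intro y hy
        rw [Finset.mem_image] at hy
        obtain ⟨f, hfD, rfl⟩ := hy
        exact hg2 f hfD
      have := (Nat.cast_le (α := ℝ)).2 this
      push_cast at this
      simp only [hF]
      linarith
    rw [← hm, hr]
    linarith
  have hsplit : (∑ g ∈ Finset.univ.filter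
        (fun g => ∃ f ∈ D, hammingDist f g ≤ l), ∏ i, p i (g i))
      + ∑ g ∈ Finset.univ.filter
        (fun g => ¬ ∃ f ∈ D, hammingDist f g ≤ l), ∏ i, p i (g i) = 1 := by
    rw [Finset.sum_filter_add_sum_filter_not]
    exact hT
  have hcompare : exp (-2 * r ^ 2 / n) ≤ exp (-(2 / (n:ℝ)) * ((l : ℝ) - a) ^ 2) := by
    apply exp_le_exp.2
    have hsq : ((l : ℝ) - a) ^ 2 ≤ r ^ 2 := by
      apply pow_le_pow_left₀ (by linarith) (by rw [hr]; linarith)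
    have h := mul_le_mul_of_nonneg_left hsq (by positivity : (0:ℝ) ≤ 2 / n)
    have e1 : -2 * r ^ 2 / n = -(2 / (n:ℝ) * r ^ 2) := by ring
    rw [e1]
    linarith
  linarith [le_trans hup hcompare]
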